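/- In a model of first-order logic with a binary relation λ on a nonempty set A, if every element has a unique λ-successor and a unique λ-predecessor, and any two elements are connected by a finite λ-path (λ* is total), then A is finite. -/
import Mathlib

theorem finite_of_unique_succ_pred_connected {A : Type} [Nonempty A] (r : A → A → Prop)
    (hpred : ∀ z : A, ∃! x, r x z) (hsucc : ∀ z : A, ∃! y, r z y)
    (hconn : ∀ x y : A, Relation.ReflTransGen r x y) :
    Finite A := by
  classical
  choose f hf hfu using hsucc
  have hr : ∀ a b, r a b → b = f a := fun a b h => hfu a b h
  have hreach : ∀ x y, Relation.ReflTransGen r x y → ∃ n, f^[n] x = y := by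
    intro x y h
    induction h with
    | refl => exact ⟨0, rfl⟩
    | tail h1 h2 ih =>
      obtain ⟨n, hn⟩ := ih
      refine ⟨n+1, ?_⟩
      rw [Function.iterate_succ_apply', hn]
      exact (hr _ _ h2).symm
  obtain ⟨x⟩ := ‹Nonempty A›
  obtain ⟨n, hn⟩ := hreach (f x) x (hconn (f x) x)
  have hp : f^[n+1] x = x := by rw [Function.iterate_succ_apply]; exact hn
  have hmul : ∀ q, f^[(n+1)*q] x = x := by
    intro q; induction q with
    | zero => simp
    | succ q ih =>
      rw [Nat.mul_succ, Function.iterate_add_apply, hp, ih]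
  have hsurj : Function.Surjective (fun k : Fin (n+1) => f^[(k : ℕ)] x) := by
    intro y
    obtain ⟨m, hm⟩ := hreach x y (hconn x y)
    refine ⟨⟨m % (n+1), Nat.mod_lt _ (Nat.succ_pos n)⟩, ?_⟩
    simp only
    conv_rhs => rw [← hm, ← Nat.mod_add_div m (n+1)]
    rw [Function.iterate_add_apply, hmul]
  exact Finite.of_surjective _ hsurj
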